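/- For 0 < β ≤ α < 1/2, defining ω(α,β) = (1/2)(α ln(α/(1-β)) + (1-α) ln((1-α)/β)), one has ω(α,β) ≥ ω(β,α); equivalently, max{ω(α,β), ω(β,α)} = ω(max{α,β}, min{α,β}). -/

import Mathlib

open Real Set Filter Topology

noncomputable def phi (y : ℝ) : ℝ := (Real.sqrt (2 * Real.pi))⁻¹ * Real.exp (-y ^ 2 / 2)

noncomputable def Phi (x : ℝ) : ℝ := ∫ y in Set.Iic x, phi y

noncomputable def PhiInv (a : ℝ) : ℝ := Function.invFun Phi a

noncomputable def omega (α β : ℝ) : ℝ :=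
  1 / 2 * (α * Real.log (α / (1 - β)) + (1 - α) * Real.log ((1 - α) / β))

lemma log_le_half_sub (t : ℝ) (ht : 1 ≤ t) : Real.log t ≤ (t - t⁻¹) / 2 := by
  have ht0 : 0 < t := lt_of_lt_of_le one_pos ht
  have h1 : Real.log t ≤ Real.sinh (Real.log t) := by
    rcases eq_or_lt_of_le ht with h | h
    · simp [← h]
    · exact le_of_lt ((Real.self_lt_sinh_iff).2 (Real.log_pos h))
  have h2 : Real.sinh (Real.log t) = (t - t⁻¹) / 2 := by
    rw [Real.sinh_eq, Real.exp_log ht0, Real.exp_neg, Real.exp_log ht0]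
  linarith [h1, h2.le]

lemma log_ratio_le (x : ℝ) (hx0 : 0 < x) (hx2 : x ≤ 1/2) :
    Real.log (1 - x) - Real.log x ≤ (1 - 2*x) / (2 * (x * (1 - x))) := by
  have hx1 : 0 < 1 - x := by linarith
  have ht : 1 ≤ (1 - x) / x := by
    rw [le_div_iff₀ hx0]; linarith
  have h := log_le_half_sub _ ht
  rw [Real.log_div (by linarith) (ne_of_gt hx0)] at h
  have hinv : ((1 - x) / x)⁻¹ = x / (1 - x) := by
    rw [inv_div]
  rw [hinv] at h
  have : ((1 - x) / x - x / (1 - x)) / 2 = (1 - 2*x) / (2 * (x * (1 - x))) := by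
    field_simp
    ring
  linarith [this ▸ h]

theorem omega_max (α β : ℝ) (hβ : 0 < β) (hβα : β ≤ α) (hα : α < 1 / 2) :
    omega α β ≥ omega β α ∧
      max (omega α β) (omega β α) = omega (max α β) (min α β) := by
  have hα0 : 0 < α := lt_of_lt_of_le hβ hβα
  have hα1 : 0 < 1 - α := by linarith
  have hβ1 : 0 < 1 - β := by linarith
  -- the auxiliary function
  set f : ℝ → ℝ := fun x => α * Real.log α - α * Real.log (1 - x) + (1 - α) * Real.log (1 - α)
      - (1 - α) * Real.log x - x * Real.log x + x * Real.log (1 - α)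
      - (1 - x) * Real.log (1 - x) + (1 - x) * Real.log α with hf
  -- derivative of f at x ∈ (0, 1)
  have hderiv : ∀ x : ℝ, 0 < x → x < 1 →
      HasDerivAt f (α / (1 - x) - (1 - α) / x - Real.log x + Real.log (1 - α)
        + Real.log (1 - x) - Real.log α) x := by
    intro x hx0 hx1
    have hx1' : (1 : ℝ) - x ≠ 0 := by linarith
    have hx0' : x ≠ 0 := ne_of_gt hx0
    have h1x : HasDerivAt (fun y : ℝ => 1 - y) (-1) x := by
      exact (hasDerivAt_id x).const_sub 1
    have hlog1x : HasDerivAt (fun y : ℝ => Real.log (1 - y)) ((1 - x)⁻¹ * (-1)) x :=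
      (Real.hasDerivAt_log hx1').comp x h1x
    have hlogx : HasDerivAt Real.log x⁻¹ x := Real.hasDerivAt_log hx0'
    have hid : HasDerivAt (fun y : ℝ => y) 1 x := hasDerivAt_id x
    have h5 : HasDerivAt (fun y : ℝ => y * Real.log y) (1 * Real.log x + x * x⁻¹) x :=
      hid.mul hlogx
    have h7 : HasDerivAt (fun y : ℝ => (1 - y) * Real.log (1 - y))
        ((-1) * Real.log (1 - x) + (1 - x) * ((1 - x)⁻¹ * (-1))) x :=
      h1x.mul hlog1x
    have := (((((((hasDerivAt_const x (α * Real.log α)).sub (hlog1x.const_mul α)).add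
        (hasDerivAt_const x ((1 - α) * Real.log (1 - α)))).sub
        (hlogx.const_mul (1 - α))).sub h5).add
        (hid.const_mul (Real.log (1 - α)))).sub h7).add
        (h1x.const_mul (Real.log α))
    convert this using 1
    · rfl
    · rfl
    · ext y; simp [hf]; ring
    · field_simp
      ring
  -- f is antitone on [β, α]
  have hanti : AntitoneOn f (Set.Icc β α) := by
    apply antitoneOn_of_deriv_nonpos (convex_Icc β α)
    · intro x hx
      have hx0 : 0 < x := lt_of_lt_of_le hβ hx.1
      have hx1 : x < 1 := by nlinarith [hx.2]
      exact (hderiv x hx0 hx1).differentiableAt.continuousAt.continuousWithinAt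
    · intro x hx
      rw [interior_Icc] at hx
      have hx0 : 0 < x := lt_trans hβ hx.1
      have hx1 : x < 1 := by nlinarith [hx.2]
      exact (hderiv x hx0 hx1).differentiableAt.differentiableWithinAt
    · intro x hx
      rw [interior_Icc] at hx
      have hx0 : 0 < x := lt_trans hβ hx.1
      have hxα : x < α := hx.2
      have hx2 : x < 1/2 := lt_trans hxα hα
      have hx1 : 0 < 1 - x := by linarith
      rw [(hderiv x hx0 (by linarith)).deriv]
      -- key inequality
      have hA := log_ratio_le α hα0 (le_of_lt hα)
      have hX := log_ratio_le x hx0 (le_of_lt hx2)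
      have hXA : x * (1 - x) ≤ α * (1 - α) := by nlinarith
      have hXpos : 0 < x * (1 - x) := mul_pos hx0 hx1
      have hApos : 0 < α * (1 - α) := mul_pos hα0 hα1
      have hA' : Real.log (1 - α) - Real.log α ≤ (1 - 2*α) / (2 * (x * (1 - x))) := by
        calc Real.log (1 - α) - Real.log α ≤ (1 - 2*α) / (2 * (α * (1 - α))) := hA
          _ ≤ (1 - 2*α) / (2 * (x * (1 - x))) := by
              apply div_le_div_of_nonneg_left (by linarith) (by linarith) (by linarith)
      have hsum : Real.log (1 - α) - Real.log α + (Real.log (1 - x) - Real.log x)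
          ≤ (1 - α - x) / (x * (1 - x)) := by
        have : (1 - 2*α) / (2 * (x * (1 - x))) + (1 - 2*x) / (2 * (x * (1 - x)))
            = (1 - α - x) / (x * (1 - x)) := by
          field_simp; ring
        linarith [hA', hX]
      have hrat : α / (1 - x) - (1 - α) / x = (α + x - 1) / (x * (1 - x)) := by
        field_simp; ring
      have : (α + x - 1) / (x * (1 - x)) + (1 - α - x) / (x * (1 - x)) = 0 := by
        field_simp
        ring
      linarith [hsum, hrat.le, hrat.ge]
  -- evaluate
  have hfα : f α = 0 := by simp only [hf]; ring
  have hfβ : f β = 2 * (omega α β - omega β α) := by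
    simp only [hf, omega]
    rw [Real.log_div (ne_of_gt hα0) (ne_of_gt hβ1), Real.log_div (ne_of_gt hα1) (ne_of_gt hβ),
      Real.log_div (ne_of_gt hβ) (ne_of_gt hα1), Real.log_div (ne_of_gt hβ1) (ne_of_gt hα0)]
    ring
  have hmem1 : β ∈ Set.Icc β α := ⟨le_refl β, hβα⟩
  have hmem2 : α ∈ Set.Icc β α := ⟨hβα, le_refl α⟩
  have hge : omega α β ≥ omega β α := by
    have := hanti hmem1 hmem2 hβα
    rw [hfα, hfβ] at this
    linarith
  refine ⟨hge, ?_⟩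
  rw [max_eq_left hβα, min_eq_right hβα, max_eq_left hge]
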